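/- arXiv:1507.05298 — 3 statements merged into one kernel-verified Lean document; each statement's English description precedes it below -/
import Mathlib

section
/- Under the setting of the previous statement, the strictly decreasing sequence (γ_k) has a limit γ* ∈ [0,1), and γ* satisfies γ* = exp(-(1-φ(γ*))/ρ). -/
open Filter Real Topology

/-- The strictly decreasing sequence `γ_k` has a limit `γ* ∈ [0,1)` which
satisfies `γ* = exp(-(1-φ(γ*))/ρ)`. -/
theorem stmt9 (b : ℕ) (p : ℕ → ℝ) (hp : ∀ j, 0 ≤ p j)
    (hsum : ∑ j ∈ Finset.Icc 1 b, p j = 1)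
    (φ : ℝ → ℝ) (hφ : ∀ γ, φ γ = ∑ j ∈ Finset.Icc 1 b, p j * γ ^ j)
    (ρ : ℝ) (hρ : 0 < ρ)
    (γ : ℕ → ℝ)
    (hmem : ∀ k, 1 ≤ k → γ k ∈ Set.Ioo (0 : ℝ) 1)
    (hfix : ∀ k, 1 ≤ k → 1 / γ k = (1 + (1 - φ (γ k)) / ((k : ℝ) * ρ)) ^ k)
    (hdec : ∀ k, 1 ≤ k → γ (k + 1) < γ k) :
    ∃ γs : ℝ, γs ∈ Set.Ico (0 : ℝ) 1 ∧
      Filter.Tendsto γ Filter.atTop (nhds γs) ∧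
      γs = Real.exp (-(1 - φ γs) / ρ) := by
  -- key bound : φ x ≤ x for x ∈ [0,1]
  have key : ∀ x : ℝ, 0 ≤ x → x ≤ 1 → φ x ≤ x := by
    intro x hx0 hx1
    rw [hφ]
    calc ∑ j ∈ Finset.Icc 1 b, p j * x ^ j
        ≤ ∑ j ∈ Finset.Icc 1 b, p j * x := by
          apply Finset.sum_le_sum
          intro j hj
          have h1 : 1 ≤ j := (Finset.mem_Icc.mp hj).1
          have : x ^ j ≤ x := by
            calc x ^ j ≤ x ^ 1 := pow_le_pow_of_le_one hx0 hx1 h1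
            _ = x := pow_one x
          exact mul_le_mul_of_nonneg_left this (hp j)
      _ = x := by rw [← Finset.sum_mul, hsum, one_mul]
  set δ : ℕ → ℝ := fun k => γ (k + 1) with hδdef
  have hanti : StrictAnti δ := strictAnti_nat_of_succ_lt (fun k => hdec (k + 1) (by omega))
  have hbdd : ∀ k, 0 ≤ δ k := fun k => (hmem (k + 1) (by omega)).1.le
  have hBdd : BddBelow (Set.range δ) := ⟨0, by rintro x ⟨k, rfl⟩; exact hbdd k⟩
  set γs := ⨅ k, δ k with hγsdef
  have htδ : Tendsto δ atTop (𝓝 γs) := tendsto_atTop_ciInf hanti.antitone hBdd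
  have htγ : Tendsto γ atTop (𝓝 γs) := (tendsto_add_atTop_iff_nat 1).mp htδ
  have hγs0 : 0 ≤ γs := le_ciInf hbdd
  have hγs1 : γs < 1 := lt_of_le_of_lt (ciInf_le hBdd 0) (hmem 1 le_rfl).2
  -- continuity of φ along γ
  have hφcont : Continuous φ := by
    have : φ = fun x => ∑ j ∈ Finset.Icc 1 b, p j * x ^ j := funext hφ
    rw [this]; continuity
  have hφc : Tendsto (fun k => φ (γ k)) atTop (𝓝 (φ γs)) := (hφcont.tendsto γs).comp htγ
  set t := (1 - φ γs) / ρ with htdef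
  have hφγs : φ γs ≤ γs := key γs hγs0 hγs1.le
  have htpos : 0 < t := div_pos (by linarith) hρ
  set tk : ℕ → ℝ := fun k => (1 - φ (γ k)) / ρ with htkdef
  set uk : ℕ → ℝ := fun k => tk k / k with hukdef
  have htk : Tendsto tk atTop (𝓝 t) := (tendsto_const_nhds.sub hφc).div_const ρ
  have htkpos : ∀ k, 1 ≤ k → 0 < tk k := by
    intro k hk
    have h1 := key (γ k) (hmem k hk).1.le (hmem k hk).2.le
    have h2 := (hmem k hk).2
    exact div_pos (by linarith) hρ
  have hukpos : ∀ k, 1 ≤ k → 0 < uk k := by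
    intro k hk
    exact div_pos (htkpos k hk) (by exact_mod_cast Nat.pos_of_ne_zero (by omega))
  have huk : Tendsto uk atTop (𝓝 0) := htk.div_atTop tendsto_natCast_atTop_atTop
  have hukne : Tendsto uk atTop (𝓝[≠] (0 : ℝ)) := by
    apply tendsto_nhdsWithin_of_tendsto_nhds_of_eventually_within _ huk
    filter_upwards [eventually_ge_atTop 1] with k hk
    exact (hukpos k hk).ne'
  -- slope limit : log(1+u)/u → 1 as u → 0, u ≠ 0
  have hslope : Tendsto (fun u : ℝ => Real.log (1 + u) / u) (𝓝[≠] (0 : ℝ)) (𝓝 1) := by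
    have h : HasDerivAt Real.log 1 1 := by
      simpa using Real.hasDerivAt_log one_ne_zero
    have h2 := hasDerivAt_iff_tendsto_slope.mp h
    have hmap : Tendsto (fun u : ℝ => 1 + u) (𝓝[≠] (0 : ℝ)) (𝓝[≠] (1 : ℝ)) := by
      apply tendsto_nhdsWithin_of_tendsto_nhds_of_eventually_within
      · have : Tendsto (fun u : ℝ => 1 + u) (𝓝 0) (𝓝 1) := by
          simpa using Continuous.tendsto (f := fun u : ℝ => 1 + u) (continuous_const.add continuous_id) (0 : ℝ)
        exact this.mono_left nhdsWithin_le_nhds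
      · filter_upwards [self_mem_nhdsWithin] with u hu
        simp only [Set.mem_compl_iff, Set.mem_singleton_iff] at hu ⊢
        intro h'; apply hu; linarith
    have h3 := h2.comp hmap
    refine h3.congr ?_
    intro u
    simp [slope_def_field, Real.log_one]
  have hlogfrac : Tendsto (fun k => Real.log (1 + uk k) / uk k) atTop (𝓝 1) :=
    hslope.comp hukne
  have hmain : Tendsto (fun k => tk k * (Real.log (1 + uk k) / uk k)) atTop (𝓝 (t * 1)) :=
    htk.mul hlogfrac
  have heq : ∀ k, 1 ≤ k →
      tk k * (Real.log (1 + uk k) / uk k) = - Real.log (γ k) := by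
    intro k hk
    have hkR : (0 : ℝ) < (k : ℝ) := by exact_mod_cast Nat.pos_of_ne_zero (by omega)
    have htk0 : tk k ≠ 0 := (htkpos k hk).ne'
    have step1 : tk k * (Real.log (1 + uk k) / uk k) = (k : ℝ) * Real.log (1 + uk k) := by
      show tk k * (Real.log (1 + uk k) / (tk k / k)) = (k : ℝ) * Real.log (1 + uk k)
      field_simp
    rw [step1]
    have harg : (1 - φ (γ k)) / ((k : ℝ) * ρ) = uk k := by
      show (1 - φ (γ k)) / ((k : ℝ) * ρ) = (1 - φ (γ k)) / ρ / k
      rw [div_div]; ring_nf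
    have hfix' := hfix k hk
    rw [harg] at hfix'
    have hγpos := (hmem k hk).1
    have : Real.log (1 / γ k) = Real.log ((1 + uk k) ^ k) := by rw [hfix']
    rw [Real.log_div one_ne_zero hγpos.ne', Real.log_one, Real.log_pow] at this
    linarith
  have hlogγ : Tendsto (fun k => Real.log (γ k)) atTop (𝓝 (-t)) := by
    have h1 : Tendsto (fun k => -(tk k * (Real.log (1 + uk k) / uk k))) atTop (𝓝 (-(t * 1))) :=
      hmain.neg
    rw [mul_one] at h1
    apply h1.congr'
    filter_upwards [eventually_ge_atTop 1] with k hk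
    rw [heq k hk, neg_neg]
  have hexp : Tendsto γ atTop (𝓝 (Real.exp (-t))) := by
    have h1 : Tendsto (fun k => Real.exp (Real.log (γ k))) atTop (𝓝 (Real.exp (-t))) :=
      (Real.continuous_exp.tendsto _).comp hlogγ
    apply h1.congr'
    filter_upwards [eventually_ge_atTop 1] with k hk
    exact Real.exp_log (hmem k hk).1
  have hfinal : γs = Real.exp (-t) := tendsto_nhds_unique htγ hexp
  exact ⟨γs, ⟨hγs0, hγs1⟩, htγ, by rw [neg_div]; exact hfinal⟩
end

section
/- Let φ(γ) = ∑_{j=1}^b p_j γ^j be a pgf and ρ > 0. Define h(γ) = (1+γ)/(1-γ) - ρ/(1-φ(γ)). Suppose γ* ∈ (0,1) satisfies (1-φ(γ*))/ρ ≥ 1-γ*. Then h is (weakly) increasing on [γ*, 1), i.e., h'(γ) ≥ 0 for γ ∈ [γ*, 1). -/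
/-- If `(1-φ(γ*))/ρ ≥ 1-γ*`, then `h(γ) = (1+γ)/(1-γ) - ρ/(1-φ(γ))` is
weakly increasing on `[γ*, 1)`. -/
theorem stmt13 (b : ℕ) (p : ℕ → ℝ) (hp : ∀ j, 0 ≤ p j)
    (hsum : ∑ j ∈ Finset.Icc 1 b, p j = 1)
    (φ : ℝ → ℝ) (hφ : ∀ γ, φ γ = ∑ j ∈ Finset.Icc 1 b, p j * γ ^ j)
    (ρ : ℝ) (hρ : 0 < ρ)
    (γs : ℝ) (hγs : γs ∈ Set.Ioo (0 : ℝ) 1)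
    (hineq : (1 - φ γs) / ρ ≥ 1 - γs) :
    MonotoneOn (fun γ => (1 + γ) / (1 - γ) - ρ / (1 - φ γ)) (Set.Ico γs 1) := by
  obtain ⟨hγs0, hγs1⟩ := hγs
  set A : ℝ → ℝ := fun γ => ∑ j ∈ Finset.Icc 1 b, p j * ∑ i ∈ Finset.range j, γ ^ i
    with hA
  have hgeom : ∀ (γ : ℝ) (j : ℕ), (1 - γ) * ∑ i ∈ Finset.range j, γ ^ i = 1 - γ ^ j := by
    intro γ j
    linear_combination (-1 : ℝ) * geom_sum_mul γ j
  have hfac : ∀ γ : ℝ, 1 - φ γ = (1 - γ) * A γ := by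
    intro γ
    have h1 : (1 - γ) * A γ = ∑ j ∈ Finset.Icc 1 b, (p j - p j * γ ^ j) := by
      rw [hA]
      simp only
      rw [Finset.mul_sum]
      refine Finset.sum_congr rfl fun j _ => ?_
      linear_combination p j * hgeom γ j
    rw [h1, Finset.sum_sub_distrib, hsum, hφ]
  have hAmono : ∀ x y : ℝ, 0 ≤ x → x ≤ y → A x ≤ A y := by
    intro x y hx hxy
    refine Finset.sum_le_sum fun j _ => ?_
    refine mul_le_mul_of_nonneg_left (Finset.sum_le_sum fun i _ => ?_) (hp j)
    exact pow_le_pow_left₀ hx hxy i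
  have hAρ : ρ ≤ A γs := by
    have h1 : (0:ℝ) < 1 - γs := by linarith
    have hineq' : 1 - γs ≤ ((1 - γs) * A γs) / ρ := by rw [← hfac]; exact hineq
    have h2 := (le_div_iff₀ hρ).mp hineq'
    nlinarith
  intro x hx y hy hxy
  obtain ⟨hγsx, hx1⟩ := hx
  obtain ⟨hγsy, hy1⟩ := hy
  have hAx : ρ ≤ A x := le_trans hAρ (hAmono γs x (le_of_lt hγs0) hγsx)
  have hAy : ρ ≤ A y := le_trans hAρ (hAmono γs y (le_of_lt hγs0) hγsy)
  have hAxy : A x ≤ A y := hAmono x y (le_trans (le_of_lt hγs0) hγsx) hxy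
  have hAxpos : 0 < A x := lt_of_lt_of_le hρ hAx
  have hAypos : 0 < A y := lt_of_lt_of_le hρ hAy
  have hx1' : (0:ℝ) < 1 - x := by linarith
  have hy1' : (0:ℝ) < 1 - y := by linarith
  have hrw : ∀ γ : ℝ, γ < 1 → 0 < A γ →
      (1 + γ) / (1 - γ) - ρ / (1 - φ γ) = (2 - ρ / A γ) / (1 - γ) - 1 := by
    intro γ hγ hAγ
    rw [hfac γ]
    have h1 : (1:ℝ) - γ ≠ 0 := by linarith
    field_simp
    ring
  simp only
  rw [hrw x hx1 hAxpos, hrw y hy1 hAypos]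
  have key : (2 - ρ / A x) / (1 - x) ≤ (2 - ρ / A y) / (1 - y) := by
    apply div_le_div₀
    · have : ρ / A y ≤ 1 := (div_le_one hAypos).mpr hAy
      linarith
    · have : ρ / A y ≤ ρ / A x :=
        div_le_div_of_nonneg_left (le_of_lt hρ) hAxpos hAxy
      linarith
    · exact hy1'
    · linarith
  linarith
end

section
/- Fix ρ ∈ (0,1). For each positive integer k, define f_k(x) = (1/(kρ))x^{k+1} - (1 + 1/(kρ))x + 1 (corresponding to λ_k = kρμ with μ normalized to 1, i.e., μ/λ_k = 1/(kρ)). Then for all x ∈ (0,1) and all k ≥ 1: f_{k+1}(x) - f_k(x) = (1/(k(k+1)ρ)) x (1-x)² ∑_{i=1}^k i x^{i-1}, and in particular f_{k+1}(x) > f_k(x) on (0,1). -/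
lemma sum_geom_deriv (x : ℝ) (k : ℕ) :
    (1 - x) ^ 2 * ∑ i ∈ Finset.Icc 1 k, (i : ℝ) * x ^ (i - 1)
      = 1 - ((k : ℝ) + 1) * x ^ k + (k : ℝ) * x ^ (k + 1) := by
  induction k with
  | zero => simp
  | succ n ih =>
    rw [Finset.sum_Icc_succ_top (by omega), mul_add, ih]
    simp only [Nat.add_sub_cancel]
    push_cast
    ring

/-- The polynomial identity
`f_{k+1}(x) - f_k(x) = (1/(k(k+1)ρ)) x (1-x)² ∑_{i=1}^k i x^{i-1}`,
with `f_k(x) = (1/(kρ)) x^{k+1} - (1 + 1/(kρ)) x + 1`; in particular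
`f_{k+1}(x) > f_k(x)` on `(0,1)`. -/
theorem stmt14 (ρ : ℝ) (hρ : ρ ∈ Set.Ioo (0 : ℝ) 1)
    (f : ℕ → ℝ → ℝ)
    (hf : ∀ k x, f k x =
      (1 / ((k : ℝ) * ρ)) * x ^ (k + 1) - (1 + 1 / ((k : ℝ) * ρ)) * x + 1) :
    ∀ k, 1 ≤ k → ∀ x ∈ Set.Ioo (0 : ℝ) 1,
      (f (k + 1) x - f k x =
        (1 / ((k : ℝ) * ((k : ℝ) + 1) * ρ)) * x * (1 - x) ^ 2 *
          ∑ i ∈ Finset.Icc 1 k, (i : ℝ) * x ^ (i - 1)) ∧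
      f k x < f (k + 1) x := by
  intro k hk x hx
  obtain ⟨hx0, hx1⟩ := hx
  obtain ⟨hρ0, hρ1⟩ := hρ
  have hkR : (0 : ℝ) < k := by exact_mod_cast hk
  have hkne : (k : ℝ) ≠ 0 := ne_of_gt hkR
  have hk1ne : (k : ℝ) + 1 ≠ 0 := by positivity
  have hρne : ρ ≠ 0 := ne_of_gt hρ0
  have key : f (k + 1) x - f k x =
      (1 / ((k : ℝ) * ((k : ℝ) + 1) * ρ)) * x * (1 - x) ^ 2 *
        ∑ i ∈ Finset.Icc 1 k, (i : ℝ) * x ^ (i - 1) := by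
    rw [hf, hf]
    have h := sum_geom_deriv x k
    rw [mul_assoc, h]
    push_cast
    field_simp
    ring
  refine ⟨key, ?_⟩
  have hsum : 0 < ∑ i ∈ Finset.Icc 1 k, (i : ℝ) * x ^ (i - 1) := by
    apply Finset.sum_pos
    · intro i hi
      have hi1 : 1 ≤ i := (Finset.mem_Icc.mp hi).1
      have : (0 : ℝ) < i := by exact_mod_cast hi1
      positivity
    · exact ⟨1, Finset.mem_Icc.mpr ⟨le_refl 1, hk⟩⟩
  have : 0 < f (k + 1) x - f k x := by
    rw [key]
    have h1 : (0 : ℝ) < 1 - x := by linarith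
    positivity
  linarith
end
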